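/- With S = ΛU the exterior-algebra model of the Cl_{m,m} spinor module (ρ(u) = u∧·, ρ(u*) = −u*⌟·), fix a volume form vol ∈ ΛᵐU and define the bilinear form f on S by f(ΛⁱU, ΛʲU) = 0 for i+j ≠ m, and f(s,t)·vol = ε_i · s ∧ t for s ∈ ΛⁱU, t ∈ Λ^{m−i}U, where ε_i = (−1)^{i(i+1)/2}. Then Clifford multiplication ρ(v) is f-skew-symmetric for every v ∈ V = U ⊕ U*, i.e., f(ρ(v)s, t) + f(s, ρ(v)t) = 0. -/

import Mathlib

/-!
STATEMENT 3: With `S = ΛU` the exterior-algebra model of the `Cl_{m,m}`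
spinor module (`ρ(u) = u∧·`, `ρ(u*) = −u*⌟·`), fix a volume form
`vol ∈ ΛᵐU` and define the bilinear form `f` on `S` by
`f(ΛⁱU, ΛʲU) = 0` for `i+j ≠ m` and `f(s,t)·vol = ε_i · s∧t` for
`s ∈ ΛⁱU`, `t ∈ Λ^{m−i}U`, where `ε_i = (−1)^{i(i+1)/2}`.  Then Clifford
multiplication `ρ(v)` is `f`-skew-symmetric for every `v ∈ V = U ⊕ U*`:
`f(ρ(v)s, t) + f(s, ρ(v)t) = 0`.

Here `ΛⁱU` is the `i`-th graded piece `(range ι)^i` of the exterior algebra.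
-/

namespace ExtSkewAux

variable {U : Type*} [AddCommGroup U] [Module ℝ U]

variable (U) in
abbrev P : Submodule ℝ (ExteriorAlgebra ℝ U) := LinearMap.range (ExteriorAlgebra.ι ℝ (M := U))

local notation "ctr" => CliffordAlgebra.contractLeft (Q := (0 : QuadraticForm ℝ U))

lemma tri (i : ℕ) : (i + 1) * (i + 2) / 2 = i * (i + 1) / 2 + (i + 1) := by
  have h := Nat.triangle_succ (i + 1)
  simpa [Nat.mul_comm] using h

lemma eps_succ (i : ℕ) :
    ((-1 : ℝ)) ^ ((i + 1) * (i + 2) / 2) = (-1) ^ (i + 1) * (-1) ^ (i * (i + 1) / 2) := by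
  rw [tri, pow_add, mul_comm]

lemma mul_mem_succ (u : U) {i : ℕ} {s : ExteriorAlgebra ℝ U} (hs : s ∈ P U ^ i) :
    ExteriorAlgebra.ι ℝ u * s ∈ P U ^ (i + 1) := by
  rw [pow_succ']
  exact Submodule.mul_mem_mul (LinearMap.mem_range_self _ u) hs

lemma mul_mem_add {i j : ℕ} {s t : ExteriorAlgebra ℝ U}
    (hs : s ∈ P U ^ i) (ht : t ∈ P U ^ j) : s * t ∈ P U ^ (i + j) := by
  rw [pow_add]
  exact Submodule.mul_mem_mul hs ht

lemma top_zero [FiniteDimensional ℝ U] {m : ℕ} (hm : Module.finrank ℝ U = m)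
    {x : ExteriorAlgebra ℝ U} (hx : x ∈ P U ^ (m + 1)) : x = 0 := by
  have h : (⋀[ℝ]^(m+1) U : Submodule ℝ (ExteriorAlgebra ℝ U)) = ⊥ := by
    rw [← ExteriorAlgebra.ιMulti_span_fixedDegree, Submodule.span_eq_bot]
    rintro _ ⟨v, rfl⟩
    apply AlternatingMap.map_linearDependent
    intro hli
    have h2 := hli.fintype_card_le_finrank
    simp only [Fintype.card_fin, hm] at h2
    omega
  have hx' : x ∈ (⋀[ℝ]^(m+1) U : Submodule ℝ (ExteriorAlgebra ℝ U)) := hx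
  rw [h] at hx'
  simpa using hx'

lemma ι_mul_comm (u : U) {i : ℕ} {s : ExteriorAlgebra ℝ U} (hs : s ∈ P U ^ i) :
    ExteriorAlgebra.ι ℝ u * s = ((-1 : ℝ) ^ i) • (s * ExteriorAlgebra.ι ℝ u) := by
  induction hs using Submodule.pow_induction_on_left' with
  | algebraMap r => simp [Algebra.commutes]
  | add x y n hx hy ihx ihy => simp [mul_add, add_mul, ihx, ihy, smul_add]
  | mem_mul w hw n x hx ih =>
    obtain ⟨w, rfl⟩ := hw
    have swap : ExteriorAlgebra.ι ℝ u * ExteriorAlgebra.ι ℝ w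
        = -(ExteriorAlgebra.ι ℝ w * ExteriorAlgebra.ι ℝ u) :=
      eq_neg_of_add_eq_zero_left (ExteriorAlgebra.ι_add_mul_swap u w)
    rw [← mul_assoc, swap, neg_mul, mul_assoc, ih, mul_smul_comm, pow_succ, mul_comm _ (-1 : ℝ),
      mul_smul, neg_one_smul, mul_assoc]

lemma ctr_mem (d : Module.Dual ℝ U) {i : ℕ} {s : ExteriorAlgebra ℝ U} (hs : s ∈ P U ^ i) :
    ctr d s ∈ P U ^ (i - 1) ∧ (i = 0 → ctr d s = 0) := by
  induction hs using Submodule.pow_induction_on_left' with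
  | algebraMap r =>
    refine ⟨?_, fun _ => ?_⟩ <;> simp [CliffordAlgebra.contractLeft_algebraMap]
  | add x y n hx hy ihx ihy =>
    exact ⟨by rw [map_add]; exact add_mem ihx.1 ihy.1,
      fun h => by rw [map_add, ihx.2 h, ihy.2 h, add_zero]⟩
  | mem_mul w hw n x hx ih =>
    obtain ⟨w, rfl⟩ := hw
    refine ⟨?_, fun h => by omega⟩
    rw [CliffordAlgebra.contractLeft_ι_mul]
    rcases Nat.eq_zero_or_pos n with rfl | hn
    · rw [ih.2 rfl, mul_zero, sub_zero]
      simpa using Submodule.smul_mem _ _ hx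
    · have h1 : n.succ - 1 = (n - 1) + 1 := by omega
      rw [h1]
      refine sub_mem ?_ (mul_mem_succ w ih.1)
      have h2 : (n - 1) + 1 = n := by omega
      rw [h2]
      exact Submodule.smul_mem _ _ hx

lemma ctr_mul (d : Module.Dual ℝ U) {i : ℕ} {s : ExteriorAlgebra ℝ U} (hs : s ∈ P U ^ i)
    (t : ExteriorAlgebra ℝ U) :
    ctr d (s * t) = ctr d s * t + ((-1 : ℝ) ^ i) • (s * ctr d t) := by
  induction hs using Submodule.pow_induction_on_left' with
  | algebraMap r =>
    simp [CliffordAlgebra.contractLeft_algebraMap, CliffordAlgebra.contractLeft_algebraMap_mul]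
  | add x y n hx hy ihx ihy =>
    simp only [add_mul, map_add, ihx, ihy, smul_add]
    abel
  | mem_mul w hw n x hx ih =>
    obtain ⟨w, rfl⟩ := hw
    rw [mul_assoc, CliffordAlgebra.contractLeft_ι_mul, ih, CliffordAlgebra.contractLeft_ι_mul,
      sub_mul, mul_add, mul_smul_comm, smul_mul_assoc, pow_succ, mul_comm _ (-1 : ℝ), mul_smul,
      neg_one_smul, ← mul_assoc, ← mul_assoc]
    abel

section Key

variable [FiniteDimensional ℝ U] {m : ℕ} (hm : Module.finrank ℝ U = m)
  (vol : ExteriorAlgebra ℝ U) (hvol0 : vol ≠ 0)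
  (f : LinearMap.BilinForm ℝ (ExteriorAlgebra ℝ U))
  (hf0 : ∀ i j : ℕ, i + j ≠ m →
    ∀ s ∈ (LinearMap.range (ExteriorAlgebra.ι ℝ (M := U))) ^ i,
    ∀ t ∈ (LinearMap.range (ExteriorAlgebra.ι ℝ (M := U))) ^ j,
    f s t = 0)
  (hf1 : ∀ i j : ℕ, i + j = m →
    ∀ s ∈ (LinearMap.range (ExteriorAlgebra.ι ℝ (M := U))) ^ i,
    ∀ t ∈ (LinearMap.range (ExteriorAlgebra.ι ℝ (M := U))) ^ j,
    f s t • vol = ((-1 : ℝ) ^ (i * (i + 1) / 2)) • (s * t))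

include hvol0 hf0 hf1 in
lemma key_iota (u : U) {i j : ℕ} {s t : ExteriorAlgebra ℝ U}
    (hs : s ∈ P U ^ i) (ht : t ∈ P U ^ j) :
    f (ExteriorAlgebra.ι ℝ u * s) t + f s (ExteriorAlgebra.ι ℝ u * t) = 0 := by
  by_cases h : (i + 1) + j = m
  · have h1 := hf1 (i + 1) j h _ (mul_mem_succ u hs) _ ht
    have h2 := hf1 i (j + 1) (by omega) _ hs _ (mul_mem_succ u ht)
    have hcomm : s * ExteriorAlgebra.ι ℝ u = ((-1 : ℝ) ^ i) • (ExteriorAlgebra.ι ℝ u * s) := by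
      rw [ι_mul_comm u hs, smul_smul, ← pow_add, Even.neg_one_pow ⟨i, rfl⟩, one_smul]
    have hst : s * (ExteriorAlgebra.ι ℝ u * t)
        = ((-1 : ℝ) ^ i) • (ExteriorAlgebra.ι ℝ u * s * t) := by
      rw [← mul_assoc, hcomm, smul_mul_assoc]
    have hzero : (f (ExteriorAlgebra.ι ℝ u * s) t + f s (ExteriorAlgebra.ι ℝ u * t)) • vol = 0 := by
      rw [add_smul, h1, h2, hst, eps_succ, pow_succ]
      module
    rcases smul_eq_zero.mp hzero with h' | h'
    · exact h'
    · exact absurd h' hvol0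
  · rw [hf0 (i + 1) j h _ (mul_mem_succ u hs) _ ht,
      hf0 i (j + 1) (by omega) _ hs _ (mul_mem_succ u ht), add_zero]

include hm hvol0 hf0 hf1 in
lemma key_ctr (d : Module.Dual ℝ U) {i j : ℕ} {s t : ExteriorAlgebra ℝ U}
    (hs : s ∈ P U ^ i) (ht : t ∈ P U ^ j) :
    f (ctr d s) t + f s (ctr d t) = 0 := by
  rcases i with _ | i'
  · rw [(ctr_mem d hs).2 rfl, map_zero, LinearMap.zero_apply, zero_add]
    rcases j with _ | j'
    · rw [(ctr_mem d ht).2 rfl, map_zero]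
    · have hct : ctr d t ∈ P U ^ j' := by simpa using (ctr_mem d ht).1
      by_cases hj : j' = m
      · have ht0 : t = 0 := top_zero hm (hj ▸ ht)
        rw [ht0, map_zero, map_zero]
      · exact hf0 0 j' (by omega) _ hs _ hct
  · have hcs : ctr d s ∈ P U ^ i' := by simpa using (ctr_mem d hs).1
    rcases j with _ | j'
    · rw [(ctr_mem d ht).2 rfl, map_zero, add_zero]
      by_cases hi : i' = m
      · have hs0 : s = 0 := top_zero hm (hi ▸ hs)
        rw [hs0, map_zero, map_zero, LinearMap.zero_apply]
      · exact hf0 i' 0 (by omega) _ hcs _ ht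
    · have hct : ctr d t ∈ P U ^ j' := by simpa using (ctr_mem d ht).1
      by_cases hc : i' + (j' + 1) = m
      · have h1 := hf1 i' (j' + 1) hc _ hcs _ ht
        have h2 := hf1 (i' + 1) j' (by omega) _ hs _ hct
        have hst0 : s * t = 0 := by
          have hmem := mul_mem_add hs ht
          have he : (i' + 1) + (j' + 1) = m + 1 := by omega
          exact top_zero hm (he ▸ hmem)
        have hd := ctr_mul d hs t
        rw [hst0, map_zero] at hd
        have hkey : ctr d s * t = -(((-1 : ℝ) ^ (i' + 1)) • (s * ctr d t)) :=
          eq_neg_of_add_eq_zero_left hd.symm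
        have hzero : (f (ctr d s) t + f s (ctr d t)) • vol = 0 := by
          rw [add_smul, h1, h2, hkey, eps_succ, pow_succ]
          module
        rcases smul_eq_zero.mp hzero with h' | h'
        · exact h'
        · exact absurd h' hvol0
      · rw [hf0 i' (j' + 1) hc _ hcs _ ht,
          hf0 (i' + 1) j' (by omega) _ hs _ hct, add_zero]

end Key

end ExtSkewAux

open ExtSkewAux in
theorem exterior_model_form_skew
    (U : Type*) [AddCommGroup U] [Module ℝ U] [FiniteDimensional ℝ U]
    (m : ℕ) (hm : Module.finrank ℝ U = m)
    (ρ : Module.Dual ℝ U × U → Module.End ℝ (ExteriorAlgebra ℝ U))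
    (hρ : ∀ (v : Module.Dual ℝ U × U) (s : ExteriorAlgebra ℝ U),
      ρ v s = ExteriorAlgebra.ι ℝ v.2 * s -
        CliffordAlgebra.contractLeft (Q := (0 : QuadraticForm ℝ U)) v.1 s)
    (vol : ExteriorAlgebra ℝ U)
    (hvol : vol ∈ (LinearMap.range (ExteriorAlgebra.ι ℝ (M := U))) ^ m)
    (hvol0 : vol ≠ 0)
    (f : LinearMap.BilinForm ℝ (ExteriorAlgebra ℝ U))
    (hf0 : ∀ i j : ℕ, i + j ≠ m →
      ∀ s ∈ (LinearMap.range (ExteriorAlgebra.ι ℝ (M := U))) ^ i,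
      ∀ t ∈ (LinearMap.range (ExteriorAlgebra.ι ℝ (M := U))) ^ j,
      f s t = 0)
    (hf1 : ∀ i j : ℕ, i + j = m →
      ∀ s ∈ (LinearMap.range (ExteriorAlgebra.ι ℝ (M := U))) ^ i,
      ∀ t ∈ (LinearMap.range (ExteriorAlgebra.ι ℝ (M := U))) ^ j,
      f s t • vol = ((-1 : ℝ) ^ (i * (i + 1) / 2)) • (s * t)) :
    ∀ (v : Module.Dual ℝ U × U) (s t : ExteriorAlgebra ℝ U),
      f (ρ v s) t + f s (ρ v t) = 0 := by
  intro v s t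
  have htop : (⨆ i : ℕ, P U ^ i) = ⊤ :=
    (DirectSum.Decomposition.isInternal
      (fun i : ℕ => (⋀[ℝ]^i U : Submodule ℝ (ExteriorAlgebra ℝ U)))).submodule_iSup_eq_top
  have hs : s ∈ ⨆ i : ℕ, P U ^ i := by rw [htop]; trivial
  refine Submodule.iSup_induction (x := s) _
    (motive := fun s => ∀ t, f (ρ v s) t + f s (ρ v t) = 0) hs ?_ ?_ ?_ t
  · intro i s hsi t
    have ht : t ∈ ⨆ j : ℕ, P U ^ j := by rw [htop]; trivial
    refine Submodule.iSup_induction (x := t) _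
      (motive := fun t => f (ρ v s) t + f s (ρ v t) = 0) ht ?_ ?_ ?_
    · intro j t htj
      rw [hρ v s, hρ v t]
      have h1 := key_iota vol hvol0 f hf0 hf1 v.2 hsi htj
      have h2 := key_ctr hm vol hvol0 f hf0 hf1 v.1 hsi htj
      simp only [map_sub, LinearMap.sub_apply]
      linarith
    · simp
    · intro x y hx hy
      simp only [map_add, LinearMap.add_apply] at hx hy ⊢
      linarith
  · intro t
    simp
  · intro x y hx hy t
    have h1 := hx t
    have h2 := hy t
    simp only [map_add, LinearMap.add_apply] at h1 h2 ⊢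
    linarith
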